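/- (Theorem 1, flip attack after watermark injection.) Suppose the attacker applies u^A_{t-1} = −u_{t-1} − φ_{t-1}, the plant evolves as y^A_t = A y^A_{t-1} + B u^A_{t-1} + w_{t-1}, and the estimator under attack is ŷ^A_t = A y^A_{t-1} − B u_{t-1} + B φ_{t-1}. Then the residual under attack satisfies the deterministic identity r^A_t = y^A_t − ŷ^A_t = −2 B φ_{t-1} + w_{t-1}; consequently, if w_{t-1} has the multivariate Gaussian law N(0, Q) on ℝⁿ, then r^A_t has law N(−2 B φ_{t-1}, Q). -/

import Mathlib

open MeasureTheory ProbabilityTheory Matrix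

open Classical in
/-- The multivariate Gaussian measure `N(m, S)` on `ℝⁿ`, defined (for positive
semidefinite `S`) as the pushforward of a product of standard Gaussians under the
affine map `z ↦ m + S^{1/2} z`; junk value `0` if `S` is not positive semidefinite. -/
noncomputable def multivariateGaussianFin {n : ℕ} (m : Fin n → ℝ)
    (S : Matrix (Fin n) (Fin n) ℝ) : Measure (Fin n → ℝ) :=
  if h : S.PosSemidef then
    Measure.map (fun z => m + (h.1.eigenvectorUnitary.1 * diagonal ((RCLike.ofReal : ℝ → ℝ) ∘ Real.sqrt ∘ h.1.eigenvalues) *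
        (star h.1.eigenvectorUnitary : Matrix (Fin n) (Fin n) ℝ)) *ᵥ z) (Measure.pi fun _ : Fin n => gaussianReal 0 1)
  else 0

lemma measurable_mulVec' {n m : ℕ} (M : Matrix (Fin n) (Fin m) ℝ) :
    Measurable (fun z : Fin m → ℝ => M *ᵥ z) :=
  (M.mulVecLin.continuous_of_finiteDimensional).measurable

/-- **Theorem 1: flip attack after watermark injection.**
If the attacker applies `u^A_{t-1} = −u_{t-1} − φ_{t-1}`, the plant evolves as
`y^A_t = A y^A_{t-1} + B u^A_{t-1} + w_{t-1}`, and the estimator under attack is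
`ŷ^A_t = A y^A_{t-1} − B u_{t-1} + B φ_{t-1}`, then the residual satisfies
`r^A_t = −2 B φ_{t-1} + w_{t-1}`; consequently, if `w_{t-1} ∼ N(0, Q)` then
`r^A_t ∼ N(−2 B φ_{t-1}, Q)`. -/
theorem flip_attack_after_watermark_residual_law
    {n c : ℕ} {Ω : Type*} [MeasurableSpace Ω] (P : Measure Ω)
    (A : Matrix (Fin n) (Fin n) ℝ) (B : Matrix (Fin n) (Fin c) ℝ)
    (Q : Matrix (Fin n) (Fin n) ℝ) (hQ : Q.PosSemidef)
    (u φ uA : Fin c → ℝ) (huA : uA = -u - φ)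
    (yAprev w yA yhatA rA : Ω → Fin n → ℝ)
    (hy : ∀ ω, yA ω = A *ᵥ yAprev ω + B *ᵥ uA + w ω)
    (hyhat : ∀ ω, yhatA ω = A *ᵥ yAprev ω - B *ᵥ u + B *ᵥ φ)
    (hr : ∀ ω, rA ω = yA ω - yhatA ω)
    (hw : Measure.map w P = multivariateGaussianFin 0 Q) :
    (∀ ω, rA ω = (-2 : ℝ) • (B *ᵥ φ) + w ω) ∧
      Measure.map rA P = multivariateGaussianFin ((-2 : ℝ) • (B *ᵥ φ)) Q := by
  have hrA : ∀ ω, rA ω = (-2 : ℝ) • (B *ᵥ φ) + w ω := by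
    intro ω
    rw [hr, hy, hyhat, huA, mulVec_sub, mulVec_neg]
    module
  refine ⟨hrA, ?_⟩
  set cst : Fin n → ℝ := (-2 : ℝ) • (B *ᵥ φ) with hcst
  have hmeas_sqrt : Measurable (fun z : Fin n → ℝ => (hQ.1.eigenvectorUnitary.1 * diagonal ((RCLike.ofReal : ℝ → ℝ) ∘ Real.sqrt ∘ hQ.1.eigenvalues) *
        (star hQ.1.eigenvectorUnitary : Matrix (Fin n) (Fin n) ℝ)) *ᵥ z) :=
    measurable_mulVec' _
  have hG : multivariateGaussianFin (0 : Fin n → ℝ) Q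
      = Measure.map (fun z => (hQ.1.eigenvectorUnitary.1 * diagonal ((RCLike.ofReal : ℝ → ℝ) ∘ Real.sqrt ∘ hQ.1.eigenvalues) *
        (star hQ.1.eigenvectorUnitary : Matrix (Fin n) (Fin n) ℝ)) *ᵥ z)
        (Measure.pi fun _ : Fin n => gaussianReal 0 1) := by
    rw [multivariateGaussianFin, dif_pos hQ]
    simp
  haveI hprob : IsProbabilityMeasure (multivariateGaussianFin (0 : Fin n → ℝ) Q) := by
    rw [hG]
    exact Measure.isProbabilityMeasure_map hmeas_sqrt.aemeasurable
  have hwmeas : AEMeasurable w P := by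
    by_contra h
    rw [Measure.map_of_not_aemeasurable h] at hw
    exact IsProbabilityMeasure.ne_zero _ hw.symm
  have hrA_eq : rA = (fun x => cst + x) ∘ w := by
    funext ω; exact hrA ω
  rw [hrA_eq,
    ← AEMeasurable.map_map_of_aemeasurable (measurable_const_add cst).aemeasurable hwmeas,
    hw, hG, Measure.map_map (measurable_const_add cst) hmeas_sqrt,
    multivariateGaussianFin, dif_pos hQ]
  rfl
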